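/- The descent set Des(P) of any partition P, regarded as a set of positive integers, is a super-distinct partition of size |P|: its elements pairwise differ by at least 2 and their sum equals |P|. -/

import Mathlib

open scoped Classical

noncomputable section

/-- `f` is a frequency sequence: `f 0 = 0` and finite support. -/
def IsFreq (f : ℕ → ℕ) : Prop := f 0 = 0 ∧ (Function.support f).Finite

/-- size `|f| = ∑ i·f i`. -/
def fsize (f : ℕ → ℕ) : ℕ := ∑ᶠ n, n * f n

/-- length `ℓ(f) = ∑ f i`. -/
def flen (f : ℕ → ℕ) : ℕ := ∑ᶠ n, f n

/-- the support `S(f)`. -/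
def suppF (f : ℕ → ℕ) : Set ℕ := {i | 1 ≤ i ∧ f i ≠ 0}

/-- `[i,j]` is a spread of `f`: a maximal interval contained in the support. -/
def IsSpread (f : ℕ → ℕ) (i j : ℕ) : Prop :=
  1 ≤ i ∧ i ≤ j ∧ (∀ k, i ≤ k → k ≤ j → f k ≠ 0) ∧ (i = 1 ∨ f (i - 1) = 0) ∧ f (j + 1) = 0

/-- `L(f)`: every other element of each spread, starting from the left end. -/
def Lset (f : ℕ → ℕ) : Set ℕ :=
  {q | ∃ i j, IsSpread f i j ∧ i ≤ q ∧ q ≤ j ∧ (q - i) % 2 = 0}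

/-- `R(f)`: every other element of each spread, starting from the right end. -/
def Rset (f : ℕ → ℕ) : Set ℕ :=
  {q | ∃ i j, IsSpread f i j ∧ i ≤ q ∧ q ≤ j ∧ (j - q) % 2 = 0}

/-- the 2-measure, as the cardinality of `R(f)`. -/
def mu2 (f : ℕ → ℕ) : ℕ := (Rset f).ncard

/-- The Burge demotion operator `∂`. -/
def dB (f : ℕ → ℕ) : ℕ → ℕ := fun n =>
  if n = 0 then 0
  else f n - (if n ∈ Rset f then 1 else 0) + (if n + 1 ∈ Rset f then 1 else 0)

/-- The promotion operator `α`. -/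
def aB (f : ℕ → ℕ) : ℕ → ℕ := fun n =>
  if n = 0 then 0
  else f n - (if n ∈ Lset f then 1 else 0) + (if n - 1 ∈ Lset f then 1 else 0)

/-- the shift `(f₂, f₃, …)`; on partitions this is `P ↦ P - 1`. -/
def tailF (f : ℕ → ℕ) : ℕ → ℕ := fun n => if n = 0 then 0 else f (n + 1)

/-- The operator `β`: `β(f) = (f₁ + 1, α(f₂, f₃, …))`. -/
def bB (f : ℕ → ℕ) : ℕ → ℕ := fun n =>
  if n = 0 then 0 else if n = 1 then f 1 + 1 else aB (tailF f) (n - 1)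

/-- the zero sequence (empty partition). -/
def zeroF : ℕ → ℕ := fun _ => 0

/-- `k` minimal with `∂^[k] f = 0`. -/
def chainK (f : ℕ → ℕ) : ℕ :=
  if h : ∃ m, dB^[m] f = zeroF then Nat.find h else 0

/-- The Burge code of `f`, as a list of letters; `false` = `a`, `true` = `b`.
The `i`-th letter (0-indexed `i`) records whether `∂^[i] f ∈ B`, i.e. `1 ∈ R(∂^[i] f)`. -/
def burgeCode (f : ℕ → ℕ) : List Bool :=
  (List.range (chainK f + 1)).map fun i => if 1 ∈ Rset (dB^[i] f) then true else false

/-- descent set of a word: 1-indexed positions `i` with `ωᵢ = b`, `ω_{i+1} = a`. -/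
def descSet (w : List Bool) : Set ℕ :=
  {i | 1 ≤ i ∧ w[i - 1]? = some true ∧ w[i]? = some false}

/-- the descent set of (the Burge code of) a partition. -/
def DesSet (f : ℕ → ℕ) : Set ℕ := descSet (burgeCode f)

/-- `Des(P)` regarded as a partition, via its frequency sequence. -/
def desFreq (f : ℕ → ℕ) : ℕ → ℕ := fun i => if i ∈ DesSet f then 1 else 0

/-- the 2-measure as the maximal size of a subset of the support without
consecutive pairs. -/
def twoMeasure (f : ℕ → ℕ) : ℕ :=
  sSup {n | ∃ T : Finset ℕ, (↑T : Set ℕ) ⊆ suppF f ∧ (∀ x ∈ T, x + 1 ∉ T) ∧ T.card = n}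

/-- evaluation at `i`: `ν_i(f) = i f_i + (i+1) f_{i+1} + 2 ∑_{j>i+1} f_j`, with `ν₀ = ν₁`. -/
def nuI (f : ℕ → ℕ) (i : ℕ) : ℕ :=
  (max i 1) * f (max i 1) + (max i 1 + 1) * f (max i 1 + 1)
    + 2 * ∑ᶠ j ∈ {j : ℕ | max i 1 + 1 < j}, f j

/-- annihilation at `i`: `ρ_i(f) = (f₁, …, f_{i-1}, f_{i+2}, f_{i+3}, …)`, with `ρ₀ = ρ₁`. -/
def rhoI (f : ℕ → ℕ) (i : ℕ) : ℕ → ℕ := fun n =>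
  if n = 0 then 0 else if n < max i 1 then f n else f (n + 2)

/-- `i ≥ 1` is right admissible in `f`. -/
def RightAdm (f : ℕ → ℕ) (i : ℕ) : Prop :=
  1 ≤ i ∧ 0 < f i ∧ (0 < f (i + 1) ∨ (f (i - 1) = 0 ∧ f (i + 1) = 0))

/-- `i ≥ 0` is left admissible in `f`. -/
def LeftAdm (f : ℕ → ℕ) (i : ℕ) : Prop :=
  0 < f (i + 1) ∧ (0 < f i ∨ (f i = 0 ∧ f (i + 2) = 0))

/-- `i` is a maximal index for `f`: `ν_i(f)` is nonzero and maximal. -/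
def MaxIdx (f : ℕ → ℕ) (i : ℕ) : Prop :=
  nuI f i ≠ 0 ∧ ∀ j, nuI f j ≤ nuI f i

end

section Infra

/-- distance to the next zero strictly above `q`. -/
noncomputable def gapU (f : ℕ → ℕ) (q : ℕ) : ℕ := sInf {t | f (q + 1 + t) = 0}

/-- distance to the next zero strictly below `q`. -/
noncomputable def gapD (f : ℕ → ℕ) (q : ℕ) : ℕ := sInf {t | f (q - (1 + t)) = 0}

lemma isFreq_bound {f : ℕ → ℕ} (hf : IsFreq f) : ∃ N, ∀ n, N ≤ n → f n = 0 := by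
  obtain ⟨b, hb⟩ := hf.2.bddAbove
  refine ⟨b + 1, fun n hn => ?_⟩
  by_contra h
  exact absurd (hb (by simpa [Function.mem_support] using h)) (by omega)

lemma gapU_ne {f : ℕ → ℕ} (hf : IsFreq f) (q : ℕ) : {t | f (q + 1 + t) = 0}.Nonempty := by
  obtain ⟨N, hN⟩ := isFreq_bound hf
  exact ⟨N, hN _ (by omega)⟩

lemma gapU_spec {f : ℕ → ℕ} (hf : IsFreq f) (q : ℕ) : f (q + 1 + gapU f q) = 0 :=
  Nat.sInf_mem (gapU_ne hf q)

lemma gapU_min {f : ℕ → ℕ} {q t : ℕ} (h : t < gapU f q) : f (q + 1 + t) ≠ 0 := by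
  have := Nat.notMem_of_lt_sInf (s := {t | f (q + 1 + t) = 0}) h
  simpa using this

lemma gapU_le {f : ℕ → ℕ} {q t : ℕ} (h : f (q + 1 + t) = 0) : gapU f q ≤ t :=
  Nat.sInf_le h

lemma gapD_ne {f : ℕ → ℕ} (hf : IsFreq f) {q : ℕ} (hq : 1 ≤ q) :
    (q - 1) ∈ {t | f (q - (1 + t)) = 0} := by
  have : q - (1 + (q - 1)) = 0 := by omega
  rw [Set.mem_setOf_eq, this]; exact hf.1

lemma gapD_spec {f : ℕ → ℕ} (hf : IsFreq f) {q : ℕ} (hq : 1 ≤ q) :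
    f (q - (1 + gapD f q)) = 0 :=
  Nat.sInf_mem ⟨_, gapD_ne hf hq⟩

lemma gapD_min {f : ℕ → ℕ} {q t : ℕ} (h : t < gapD f q) : f (q - (1 + t)) ≠ 0 := by
  have := Nat.notMem_of_lt_sInf (s := {t | f (q - (1 + t)) = 0}) h
  simpa using this

lemma gapD_le_pred {f : ℕ → ℕ} (hf : IsFreq f) {q : ℕ} (hq : 1 ≤ q) : gapD f q ≤ q - 1 :=
  Nat.sInf_le (gapD_ne hf hq)

/-- the spread containing a support element `q`. -/
lemma spread_of_mem {f : ℕ → ℕ} (hf : IsFreq f) {q : ℕ} (hq : 1 ≤ q) (hq2 : f q ≠ 0) :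
    IsSpread f (q - gapD f q) (q + gapU f q) := by
  have hd := gapD_le_pred hf hq
  refine ⟨by omega, by omega, ?_, Or.inr ?_, ?_⟩
  · intro k hk1 hk2
    rcases le_or_gt q k with h | h
    · rcases Nat.eq_or_lt_of_le h with rfl | h'
      · exact hq2
      · have : k - q - 1 < gapU f q := by omega
        have := gapU_min this
        have hkk : q + 1 + (k - q - 1) = k := by omega
        rwa [hkk] at this
    · have : q - k - 1 < gapD f q := by omega
      have := gapD_min this
      have hkk : q - (1 + (q - k - 1)) = k := by omega
      rwa [hkk] at this
  · have h2 : q - gapD f q - 1 = q - (1 + gapD f q) := by omega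
    rw [h2]; exact gapD_spec hf hq
  · have h := gapU_spec hf q
    rwa [show q + 1 + gapU f q = q + gapU f q + 1 by omega] at h

lemma spread_unique {f : ℕ → ℕ} {i j i' j' q : ℕ} (h : IsSpread f i j) (h' : IsSpread f i' j')
    (h1 : i ≤ q) (h2 : q ≤ j) (h3 : i' ≤ q) (h4 : q ≤ j') : i = i' ∧ j = j' := by
  obtain ⟨hi1, hij, hmem, hleft, hright⟩ := h
  obtain ⟨hi1', hij', hmem', hleft', hright'⟩ := h'
  constructor
  · by_contra hne
    rcases Nat.lt_or_ge i i' with hlt | hge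
    · have : f (i' - 1) ≠ 0 := hmem (i' - 1) (by omega) (by omega)
      rcases hleft' with rfl | hz
      · omega
      · exact this hz
    · have hlt : i' < i := by omega
      have : f (i - 1) ≠ 0 := hmem' (i - 1) (by omega) (by omega)
      rcases hleft with rfl | hz
      · omega
      · exact this hz
  · by_contra hne
    rcases Nat.lt_or_ge j j' with hlt | hge
    · exact (hmem' (j + 1) (by omega) (by omega)) hright
    · exact (hmem (j' + 1) (by omega) (by omega)) hright'

lemma Rset_sub {f : ℕ → ℕ} {q : ℕ} (h : q ∈ Rset f) : 1 ≤ q ∧ f q ≠ 0 := by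
  obtain ⟨i, j, hs, h1, h2, _⟩ := h
  exact ⟨le_trans hs.1 h1, hs.2.2.1 q h1 h2⟩

lemma gapU_eq_of_spread {f : ℕ → ℕ} {i j q : ℕ} (h : IsSpread f i j) (h1 : i ≤ q) (h2 : q ≤ j) :
    gapU f q = j - q := by
  have hle : gapU f q ≤ j - q := gapU_le (by rw [show q + 1 + (j - q) = j + 1 by omega]; exact h.2.2.2.2)
  rcases Nat.eq_or_lt_of_le hle with he | hlt
  · exact he
  · exact absurd (h.2.2.1 (q + 1 + gapU f q) (by omega) (by omega)) (by simpa [gapU] using Nat.sInf_mem (⟨j - q, by rw [Set.mem_setOf_eq, show q + 1 + (j - q) = j + 1 by omega]; exact h.2.2.2.2⟩ : {t | f (q + 1 + t) = 0}.Nonempty))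

lemma mem_Rset_of {f : ℕ → ℕ} (hf : IsFreq f) {q : ℕ} (hq : 1 ≤ q) (hq2 : f q ≠ 0)
    (he : gapU f q % 2 = 0) : q ∈ Rset f := by
  refine ⟨q - gapD f q, q + gapU f q, spread_of_mem hf hq hq2, by omega, by omega, by omega⟩

lemma mem_Rset_elim {f : ℕ → ℕ} {q : ℕ} (h : q ∈ Rset f) :
    1 ≤ q ∧ f q ≠ 0 ∧ gapU f q % 2 = 0 := by
  obtain ⟨i, j, hs, h1, h2, h3⟩ := h
  refine ⟨le_trans hs.1 h1, hs.2.2.1 q h1 h2, ?_⟩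
  rw [gapU_eq_of_spread hs h1 h2]; exact h3

lemma gapU_succ {f : ℕ → ℕ} (hf : IsFreq f) {q : ℕ} (h : f (q + 1) ≠ 0) :
    gapU f q = gapU f (q + 1) + 1 := by
  have h0 : gapU f q ≠ 0 := by
    intro h'
    have := gapU_spec hf q
    rw [h'] at this
    exact h (by simpa using this)
  have hub : gapU f (q + 1) ≤ gapU f q - 1 := by
    apply gapU_le
    have := gapU_spec hf q
    rwa [show q + 1 + gapU f q = q + 1 + 1 + (gapU f q - 1) by omega] at this
  have hlb : gapU f q ≤ gapU f (q + 1) + 1 := by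
    apply gapU_le
    have := gapU_spec hf (q + 1)
    rwa [show q + 1 + 1 + gapU f (q + 1) = q + 1 + (gapU f (q + 1) + 1) by omega] at this
  omega

lemma not_both_Rset {f : ℕ → ℕ} (hf : IsFreq f) {q : ℕ} (h : q ∈ Rset f) :
    q + 1 ∉ Rset f := by
  intro h'
  obtain ⟨-, -, he⟩ := mem_Rset_elim h
  obtain ⟨-, hq2, he'⟩ := mem_Rset_elim h'
  have := gapU_succ hf hq2
  omega

end Infra

section DBfacts

lemma dB_zero (f : ℕ → ℕ) : dB f 0 = 0 := by simp [dB]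

lemma dB_mem {f : ℕ → ℕ} (hf : IsFreq f) {q : ℕ} (hq : 1 ≤ q) (h : q ∈ Rset f) :
    dB f q = f q - 1 := by
  have h' : q + 1 ∉ Rset f := not_both_Rset hf h
  simp [dB, h, h', (Nat.pos_iff_ne_zero.mp hq)]

lemma dB_succ_mem {f : ℕ → ℕ} (hf : IsFreq f) {q : ℕ} (hq : 1 ≤ q) (h : q + 1 ∈ Rset f) :
    dB f q = f q + 1 := by
  have h' : q ∉ Rset f := by
    intro h'; exact (not_both_Rset hf h') h
  simp [dB, h, h', (Nat.pos_iff_ne_zero.mp hq)]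

lemma dB_not_mem {f : ℕ → ℕ} {q : ℕ} (hq : 1 ≤ q) (h : q ∉ Rset f) (h' : q + 1 ∉ Rset f) :
    dB f q = f q := by
  simp [dB, h, h', (Nat.pos_iff_ne_zero.mp hq)]

lemma isFreq_dB {f : ℕ → ℕ} (hf : IsFreq f) : IsFreq (dB f) := by
  constructor
  · exact dB_zero f
  · apply Set.Finite.subset (hf.2.union (hf.2.image (· - 1)))
    intro n hn
    rw [Function.mem_support] at hn
    by_cases hn0 : n = 0
    · simp [hn0, dB_zero] at hn
    rcases Classical.em (f n ≠ 0) with h | h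
    · exact Or.inl h
    · push_neg at h
      right
      by_cases h1 : n + 1 ∈ Rset f
      · exact ⟨n + 1, (Rset_sub h1).2, by simp⟩
      · by_cases h2 : n ∈ Rset f
        · exact absurd (Rset_sub h2).2 (by simpa using h)
        · rw [dB_not_mem (by omega) h2 h1] at hn; exact absurd h hn

/-- P1: if `q ∈ R(f)` drops out of `R(∂f)`, then `q - 1 ∈ R(∂f)`. -/
lemma P1 {f : ℕ → ℕ} (hf : IsFreq f) {q : ℕ} (hq : 2 ≤ q) (h : q ∈ Rset f)
    (h' : q ∉ Rset (dB f)) : q - 1 ∈ Rset (dB f) := by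
  have hg : IsFreq (dB f) := isFreq_dB hf
  obtain ⟨-, hfq, he⟩ := mem_Rset_elim h
  have hq1R : q - 1 ∉ Rset f := by
    intro hx
    have := not_both_Rset hf hx
    rw [show q - 1 + 1 = q by omega] at this
    exact this h
  have hgq1 : dB f (q - 1) = f (q - 1) + 1 := by
    have := dB_succ_mem hf (q := q - 1) (by omega) (by rwa [show q - 1 + 1 = q by omega])
    exact this
  apply mem_Rset_of hg (by omega) (by omega)
  by_cases hz : dB f q = 0
  · have : gapU (dB f) (q - 1) = 0 := by
      apply Nat.le_zero.mp
      apply gapU_le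
      rwa [show q - 1 + 1 + 0 = q by omega]
    omega
  · have hodd : gapU (dB f) q % 2 = 1 := by
      rcases Nat.mod_two_eq_zero_or_one (gapU (dB f) q) with h2 | h2
      · exact absurd (mem_Rset_of hg (by omega) hz h2) h'
      · exact h2
    have := gapU_succ hg (q := q - 1) (by rwa [show q - 1 + 1 = q by omega])
    rw [show q - 1 + 1 = q by omega] at this
    omega

/-- P2: if `r` is in the support of `∂f` and `r + 1 ∉ R(f)`, then `r ∈ R(f)`. -/
lemma P2 {f : ℕ → ℕ} (hf : IsFreq f) {r : ℕ} (hr : 1 ≤ r) (h : dB f r ≠ 0)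
    (h' : r + 1 ∉ Rset f) : r ∈ Rset f := by
  by_contra hR
  have hfr : f r ≠ 0 := by
    rw [dB_not_mem hr hR h'] at h; exact h
  rcases Nat.mod_two_eq_zero_or_one (gapU f r) with h2 | h2
  · exact hR (mem_Rset_of hf hr hfr h2)
  · have hpos : 0 < gapU f r := by omega
    have hfr1 : f (r + 1) ≠ 0 := by
      have := gapU_min (t := 0) hpos
      simpa using this
    have hs := gapU_succ hf hfr1
    exact h' (mem_Rset_of hf (by omega) hfr1 (by omega))

end DBfacts

section Card

lemma Rset_subset_support (f : ℕ → ℕ) : Rset f ⊆ Function.support f := by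
  intro q hq
  exact (Rset_sub hq).2

lemma Rset_finite {f : ℕ → ℕ} (hf : IsFreq f) : (Rset f).Finite :=
  hf.2.subset (Rset_subset_support f)

lemma CL {f : ℕ → ℕ} (hf : IsFreq f) :
    (Rset f).ncard = (Rset (dB f)).ncard + (if 1 ∈ Rset f ∧ 1 ∉ Rset (dB f) then 1 else 0) := by
  have hg : IsFreq (dB f) := isFreq_dB hf
  set R := Rset f with hR
  set R' := Rset (dB f) with hR'
  have hRfin : R.Finite := Rset_finite hf
  have hR'fin : R'.Finite := Rset_finite hg
  set ψ : ℕ → ℕ := fun r => if r + 1 ∈ R then r + 1 else r with hψ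
  have hψmem : ∀ r ∈ R', ψ r ∈ R := by
    intro r hr
    obtain ⟨hr1, hr2⟩ := Rset_sub hr
    by_cases hc : r + 1 ∈ R
    · simpa [hψ, hc] using hc
    · simpa [hψ, hc] using P2 hf hr1 hr2 hc
  have hψinj : Set.InjOn ψ R' := by
    intro r hr r' hr' he
    have h1 := Rset_sub hr
    have h2 := Rset_sub hr'
    simp only [hψ] at he
    by_cases hc : r + 1 ∈ R <;> by_cases hc' : r' + 1 ∈ R <;> simp [hc, hc'] at he
    · omega
    · exfalso; rw [← he] at hr'; exact not_both_Rset hg hr hr'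
    · exfalso; rw [he] at hr; exact not_both_Rset hg hr' hr
    · exact he
  set χ : ℕ → ℕ := fun q => if q ∈ R' then q else q - 1 with hχ
  have hχinj : Set.InjOn χ R := by
    intro q hq q' hq' he
    have h1 := Rset_sub hq
    have h2 := Rset_sub hq'
    simp only [hχ] at he
    by_cases hc : q ∈ R' <;> by_cases hc' : q' ∈ R' <;> simp [hc, hc'] at he
    · exact he
    · exfalso
      have : q' = q + 1 ∨ q' = 1 := by omega
      rcases this with rfl | rfl
      · exact not_both_Rset hf hq hq'
      · have : q = 1 := by omega
        subst this
        exact hc' (by simpa using hc)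
    · exfalso
      have : q = q' + 1 ∨ q = 1 := by omega
      rcases this with rfl | rfl
      · exact not_both_Rset hf hq' hq
      · have : q' = 1 := by omega
        subst this
        exact hc (by simpa using hc')
    · omega
  by_cases hε : 1 ∈ R ∧ 1 ∉ R'
  · rw [if_pos hε]
    have le1 : R'.ncard ≤ (R \ {1}).ncard := by
      apply Set.ncard_le_ncard_of_injOn ψ _ hψinj (hRfin.subset Set.diff_subset)
      intro r hr
      refine ⟨hψmem r hr, ?_⟩
      simp only [Set.mem_singleton_iff, hψ]
      obtain ⟨hr1, -⟩ := Rset_sub hr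
      by_cases hc : r + 1 ∈ R <;> simp [hc]
      · omega
      · intro h1; rw [h1] at hr; exact hε.2 hr
    have le2 : (R \ {1}).ncard ≤ R'.ncard := by
      apply Set.ncard_le_ncard_of_injOn χ _ (hχinj.mono Set.diff_subset) hR'fin
      intro q hq
      obtain ⟨hqR, hq1⟩ := hq
      simp only [Set.mem_singleton_iff] at hq1
      obtain ⟨ha, -⟩ := Rset_sub hqR
      by_cases hc : q ∈ R'
      · simpa [hχ, hc] using hc
      · simpa [hχ, hc] using P1 hf (by omega) hqR hc
    have : R.ncard = (R \ {1}).ncard + 1 := (Set.ncard_diff_singleton_add_one hε.1 hRfin).symm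
    omega
  · rw [if_neg hε]
    have le1 : R'.ncard ≤ R.ncard :=
      Set.ncard_le_ncard_of_injOn ψ hψmem hψinj hRfin
    have le2 : R.ncard ≤ R'.ncard := by
      apply Set.ncard_le_ncard_of_injOn χ _ hχinj hR'fin
      intro q hqR
      obtain ⟨ha, -⟩ := Rset_sub hqR
      by_cases hc : q ∈ R'
      · simpa [hχ, hc] using hc
      · have hq2 : 2 ≤ q := by
          rcases Nat.eq_or_lt_of_le ha with h1 | h1
          · exfalso; rw [← h1] at hqR hc; exact hε ⟨hqR, hc⟩
          · omega
        simpa [hχ, hc] using P1 hf hq2 hqR hc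
    omega

end Card

section Size

lemma zero_not_mem_Rset (f : ℕ → ℕ) : 0 ∉ Rset f := by
  intro h
  exact absurd (Rset_sub h).1 (by omega)

lemma fsize_dB {f : ℕ → ℕ} (hf : IsFreq f) :
    fsize f = fsize (dB f) + (Rset f).ncard := by
  classical
  obtain ⟨N, hN⟩ := isFreq_bound hf
  set R := Rset f with hRdef
  have hRfin : R.Finite := Rset_finite hf
  set RF : Finset ℕ := hRfin.toFinset with hRF
  have hmemRF : ∀ n, n ∈ RF ↔ n ∈ R := by
    intro n; simp [hRF, Set.Finite.mem_toFinset]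
  have hRlt : ∀ n ∈ R, n < N := by
    intro n hn
    by_contra h
    exact (Rset_sub hn).2 (hN n (by omega))
  set s : Finset ℕ := Finset.range N with hs
  have hfsum : fsize f = ∑ n ∈ s, n * f n := by
    apply finsum_eq_sum_of_support_subset
    intro n hn
    simp only [Function.mem_support] at hn
    have : f n ≠ 0 := by intro h; rw [h] at hn; simp at hn
    have : n < N := by by_contra h; exact this (hN n (by omega))
    simpa [hs] using this
  have hgsum : fsize (dB f) = ∑ n ∈ s, n * dB f n := by
    apply finsum_eq_sum_of_support_subset
    intro n hn
    simp only [Function.mem_support] at hn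
    have hg : dB f n ≠ 0 := by intro h; rw [h] at hn; simp at hn
    have : n < N := by
      by_contra h
      apply hg
      rcases Nat.eq_zero_or_pos n with rfl | hn1
      · exact dB_zero f
      · rw [dB_not_mem hn1 (fun hm => (Rset_sub hm).2 (hN n (by omega)))
          (fun hm => (Rset_sub hm).2 (hN (n + 1) (by omega)))]
        exact hN n (by omega)
    simpa [hs] using this
  have hpoint : ∀ n, n * dB f n + (if n ∈ R then n else 0)
      = n * f n + (if n + 1 ∈ R then n else 0) := by
    intro n
    rcases Nat.eq_zero_or_pos n with rfl | hn1
    · simp [dB_zero]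
    by_cases h1 : n ∈ R
    · have h2 : n + 1 ∉ R := not_both_Rset hf h1
      rw [dB_mem hf hn1 h1, if_pos h1, if_neg h2]
      have hfn : 1 ≤ f n := Nat.one_le_iff_ne_zero.mpr (Rset_sub h1).2
      have : f n = (f n - 1) + 1 := by omega
      rw [this, Nat.add_sub_cancel, mul_add, mul_one]
      omega
    · by_cases h2 : n + 1 ∈ R
      · rw [dB_succ_mem hf hn1 h2, if_neg h1, if_pos h2, mul_add, mul_one]
        omega
      · rw [dB_not_mem hn1 h1 h2, if_neg h1, if_neg h2]
  have hsum_eq : (∑ n ∈ s, n * dB f n) + (∑ n ∈ s, (if n ∈ R then n else 0))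
      = (∑ n ∈ s, n * f n) + (∑ n ∈ s, (if n + 1 ∈ R then n else 0)) := by
    rw [← Finset.sum_add_distrib, ← Finset.sum_add_distrib]
    exact Finset.sum_congr rfl (fun n _ => hpoint n)
  have hS1 : (∑ n ∈ s, (if n ∈ R then n else 0)) = ∑ r ∈ RF, r := by
    rw [← Finset.sum_filter]
    apply Finset.sum_congr _ (fun n _ => rfl)
    ext n
    simp only [Finset.mem_filter, hmemRF, hs, Finset.mem_range]
    constructor
    · exact fun h => h.2
    · exact fun h => ⟨hRlt n h, h⟩
  have hS2 : (∑ n ∈ s, (if n + 1 ∈ R then n else 0)) = ∑ r ∈ RF, (r - 1) := by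
    have h1 : ∀ n, (if n + 1 ∈ R then n else 0) = (if n + 1 ∈ R then (n + 1) - 1 else 0) := by
      intro n; simp
    calc (∑ n ∈ s, (if n + 1 ∈ R then n else 0))
        = ∑ n ∈ Finset.range N, (if n + 1 ∈ R then (n + 1) - 1 else 0) := by
          rw [hs]; exact Finset.sum_congr rfl (fun n _ => h1 n)
      _ = ∑ n ∈ Finset.range (N + 1), (if n ∈ R then n - 1 else 0) := by
          rw [Finset.sum_range_succ']
          simp [zero_not_mem_Rset]
      _ = ∑ r ∈ RF, (r - 1) := by
          rw [← Finset.sum_filter]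
          apply Finset.sum_congr _ (fun n _ => rfl)
          ext n
          simp only [Finset.mem_filter, hmemRF, Finset.mem_range]
          constructor
          · exact fun h => h.2
          · exact fun h => ⟨by have := hRlt n h; omega, h⟩
  have hcard : (∑ r ∈ RF, (r - 1)) + RF.card = ∑ r ∈ RF, r := by
    rw [Finset.card_eq_sum_ones, ← Finset.sum_add_distrib]
    apply Finset.sum_congr rfl
    intro r hr
    have : 1 ≤ r := (Rset_sub ((hmemRF r).mp hr)).1
    omega
  have hncard : R.ncard = RF.card := Set.ncard_eq_toFinset_card R hRfin
  rw [hfsum, hgsum, hncard]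
  omega

end Size

section Chain

lemma isFreq_zeroF : IsFreq zeroF := by
  refine ⟨rfl, ?_⟩
  have : Function.support zeroF = ∅ := by
    ext n; simp [zeroF]
  rw [this]
  exact Set.finite_empty

lemma Rset_zeroF : Rset zeroF = ∅ := by
  ext q
  simp only [Set.mem_empty_iff_false, iff_false]
  intro h
  exact (Rset_sub h).2 rfl

lemma dB_zeroF : dB zeroF = zeroF := by
  funext n
  simp [dB, zeroF, Rset_zeroF]

lemma mu2_pos {f : ℕ → ℕ} (hf : IsFreq f) (hne : f ≠ zeroF) : 0 < (Rset f).ncard := by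
  have : ∃ n, f n ≠ 0 := by
    by_contra h
    push_neg at h
    exact hne (funext fun n => h n)
  obtain ⟨n, hn⟩ := this
  have hn1 : 1 ≤ n := by
    rcases Nat.eq_zero_or_pos n with rfl | h
    · exact absurd hf.1 hn
    · exact h
  have hs := spread_of_mem hf hn1 hn
  have hj : n + gapU f n ∈ Rset f := by
    apply mem_Rset_of hf (by omega) (hs.2.2.1 _ (by omega) (by omega))
    have h0 : gapU f (n + gapU f n) = 0 := by
      apply Nat.le_zero.mp
      apply gapU_le
      rw [show n + gapU f n + 1 + 0 = n + 1 + gapU f n by omega]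
      exact gapU_spec hf n
    omega
  rw [Set.ncard_pos (Rset_finite hf)]
  exact ⟨_, hj⟩

lemma fsize_dB_lt {f : ℕ → ℕ} (hf : IsFreq f) (hne : f ≠ zeroF) :
    fsize (dB f) < fsize f := by
  have h1 := fsize_dB hf
  have h2 := mu2_pos hf hne
  omega

lemma exists_iter_aux (n : ℕ) : ∀ f, IsFreq f → fsize f ≤ n → ∃ m, dB^[m] f = zeroF := by
  induction n with
  | zero =>
    intro f hf hle
    by_cases hne : f = zeroF
    · exact ⟨0, hne⟩
    · have := fsize_dB_lt hf hne
      omega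
  | succ n ih =>
    intro f hf hle
    by_cases hne : f = zeroF
    · exact ⟨0, hne⟩
    · obtain ⟨m, hm⟩ := ih (dB f) (isFreq_dB hf) (by have := fsize_dB_lt hf hne; omega)
      exact ⟨m + 1, by rwa [Function.iterate_succ_apply]⟩

lemma exists_iter {f : ℕ → ℕ} (hf : IsFreq f) : ∃ m, dB^[m] f = zeroF :=
  exists_iter_aux (fsize f) f hf le_rfl

lemma chainK_eq {f : ℕ → ℕ} (hf : IsFreq f) : chainK f = Nat.find (exists_iter hf) := by
  rw [chainK, dif_pos (exists_iter hf)]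

lemma chainK_spec {f : ℕ → ℕ} (hf : IsFreq f) : dB^[chainK f] f = zeroF := by
  rw [chainK_eq hf]
  exact Nat.find_spec (exists_iter hf)

lemma chainK_zeroF : chainK zeroF = 0 := by
  rw [chainK_eq isFreq_zeroF]
  simp

lemma chainK_succ {f : ℕ → ℕ} (hf : IsFreq f) (hne : f ≠ zeroF) :
    chainK f = chainK (dB f) + 1 := by
  have hg : IsFreq (dB f) := isFreq_dB hf
  rw [chainK_eq hf, chainK_eq hg]
  have hk0 : Nat.find (exists_iter hf) ≠ 0 := by
    intro h
    exact hne (by simpa [h] using Nat.find_spec (exists_iter hf))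
  have h1 : Nat.find (exists_iter hg) ≤ Nat.find (exists_iter hf) - 1 := by
    apply Nat.find_le
    have := Nat.find_spec (exists_iter hf)
    rwa [show Nat.find (exists_iter hf) = (Nat.find (exists_iter hf) - 1) + 1 by omega,
      Function.iterate_succ_apply] at this
  have h2 : Nat.find (exists_iter hf) ≤ Nat.find (exists_iter hg) + 1 := by
    apply Nat.find_le
    rw [Function.iterate_succ_apply]
    exact Nat.find_spec (exists_iter hg)
  omega

lemma burgeCode_zeroF : burgeCode zeroF = [false] := by
  have h : (1:ℕ) ∉ Rset zeroF := by rw [Rset_zeroF]; simp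
  rw [burgeCode, chainK_zeroF, zero_add, show List.range 1 = [0] from rfl, List.map_singleton,
    Function.iterate_zero_apply, if_neg h]

lemma burgeCode_cons {f : ℕ → ℕ} (hf : IsFreq f) (hne : f ≠ zeroF) :
    burgeCode f = (if 1 ∈ Rset f then true else false) :: burgeCode (dB f) := by
  rw [burgeCode, burgeCode, chainK_succ hf hne, List.range_succ_eq_map, List.map_cons]
  refine congrArg₂ List.cons ?_ ?_
  · rfl
  · rw [List.map_map]
    apply List.map_congr_left
    intro i _
    rfl

lemma burgeCode_ne_nil (f : ℕ → ℕ) : burgeCode f ≠ [] := by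
  rw [burgeCode]
  simp

end Chain

section Desc

lemma descSet_finite (w : List Bool) : (descSet w).Finite := by
  apply Set.Finite.subset (Set.finite_Iio w.length)
  intro i hi
  obtain ⟨-, -, h⟩ := hi
  exact (List.getElem?_eq_some_iff.mp h).1

lemma descSet_pos {w : List Bool} {i : ℕ} (h : i ∈ descSet w) : 1 ≤ i := h.1

lemma descSet_single_false : descSet [false] = ∅ := by
  ext i
  simp only [Set.mem_empty_iff_false, iff_false]
  rintro ⟨h1, h2, h3⟩
  rcases Nat.eq_or_lt_of_le h1 with h | h
  · rw [← h] at h2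
    simp at h2
  · rw [List.getElem?_eq_none_iff.mpr (by simp; omega)] at h2
    exact absurd h2 (by simp)

lemma descSet_cons (x : Bool) (w : List Bool) :
    descSet (x :: w) = (if x = true ∧ w[0]? = some false then {1} else ∅)
      ∪ (fun i => i + 1) '' descSet w := by
  ext i
  simp only [descSet, Set.mem_setOf_eq, Set.mem_union, Set.mem_image]
  constructor
  · rintro ⟨h1, h2, h3⟩
    match i, h1 with
    | 1, _ =>
      left
      rw [show (1:ℕ) - 1 = 0 from rfl, List.getElem?_cons_zero] at h2
      rw [show (x :: w)[1]? = w[0]? from rfl] at h3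
      simp only [Option.some_inj] at h2
      rw [if_pos ⟨h2, h3⟩]
      exact rfl
    | (j + 2), _ =>
      right
      refine ⟨j + 1, ⟨by omega, ?_, ?_⟩, rfl⟩
      · rw [show j + 1 - 1 = j from rfl]
        rw [show j + 2 - 1 = j + 1 by rfl, List.getElem?_cons_succ] at h2
        exact h2
      · rw [show (x :: w)[j + 2]? = w[j + 1]? from rfl] at h3
        exact h3
  · rintro (h | ⟨j, ⟨hj1, hj2, hj3⟩, rfl⟩)
    · by_cases hc : x = true ∧ w[0]? = some false
      · rw [if_pos hc] at h
        rw [Set.mem_singleton_iff] at h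
        subst h
        exact ⟨le_rfl, by simp [hc.1], by simpa using hc.2⟩
      · rw [if_neg hc] at h
        exact absurd h (Set.notMem_empty _)
    · refine ⟨by omega, ?_, ?_⟩
      · rw [show j + 1 - 1 = j from rfl, show j = (j - 1) + 1 by omega, List.getElem?_cons_succ]
        exact hj2
      · rw [List.getElem?_cons_succ]
        exact hj3

end Desc

section DescSum

lemma descSet_cons_disjoint (x : Bool) (w : List Bool) :
    Disjoint (if x = true ∧ w[0]? = some false then ({1} : Set ℕ) else ∅)
      ((fun i => i + 1) '' descSet w) := by
  rw [Set.disjoint_left]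
  intro a ha hb
  obtain ⟨j, hj, rfl⟩ := hb
  have hj1 := descSet_pos hj
  by_cases hc : x = true ∧ w[0]? = some false
  · rw [if_pos hc, Set.mem_singleton_iff] at ha
    have ha' : j + 1 = 1 := ha
    omega
  · rw [if_neg hc] at ha
    exact absurd ha (Set.notMem_empty _)

lemma descSet_cons_ncard (x : Bool) (w : List Bool) :
    (descSet (x :: w)).ncard
      = (if x = true ∧ w[0]? = some false then 1 else 0) + (descSet w).ncard := by
  rw [descSet_cons, Set.ncard_union_eq (descSet_cons_disjoint x w)
    (by split <;> simp) ((descSet_finite w).image _),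
    Set.ncard_image_of_injective _ (add_left_injective 1)]
  congr 1
  split <;> simp

lemma finsum_mem_shift {T : Set ℕ} (hT : T.Finite) :
    ∑ᶠ i ∈ (fun i => i + 1) '' T, i = (∑ᶠ i ∈ T, i) + T.ncard := by
  rw [finsum_mem_image (fun a _ b _ h => by simpa using h : Set.InjOn (fun i => i + 1) T)]
  rw [← Set.Finite.coe_toFinset hT, finsum_mem_coe_finset, finsum_mem_coe_finset,
    Finset.sum_add_distrib]
  simp [Set.ncard_eq_toFinset_card T hT]

lemma descSet_cons_sum (x : Bool) (w : List Bool) :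
    ∑ᶠ i ∈ descSet (x :: w), i
      = (if x = true ∧ w[0]? = some false then 1 else 0) + (∑ᶠ i ∈ descSet w, i)
        + (descSet w).ncard := by
  rw [descSet_cons, finsum_mem_union (descSet_cons_disjoint x w)
    (by split <;> simp) ((descSet_finite w).image _), finsum_mem_shift (descSet_finite w)]
  have : ∑ᶠ i ∈ (if x = true ∧ w[0]? = some false then ({1} : Set ℕ) else ∅), i
      = (if x = true ∧ w[0]? = some false then 1 else 0) := by
    split
    · exact finsum_mem_singleton
    · exact finsum_mem_empty
  rw [this]
  omega

end DescSum

section Main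

lemma burgeCode_head (f : ℕ → ℕ) :
    (burgeCode f)[0]? = some (if 1 ∈ Rset f then true else false) := by
  rw [burgeCode, List.range_succ_eq_map, List.map_cons, List.getElem?_cons_zero,
    Function.iterate_zero_apply]

lemma fsize_zeroF : fsize zeroF = 0 := by
  rw [fsize]
  have : (fun n => n * zeroF n) = fun _ => 0 := by
    funext n; simp [zeroF]
  rw [this, finsum_zero]

lemma main_aux (n : ℕ) : ∀ f, IsFreq f → fsize f ≤ n →
    (DesSet f).ncard = (Rset f).ncard ∧ ∑ᶠ i ∈ DesSet f, i = fsize f := by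
  induction n with
  | zero =>
    intro f hf hle
    by_cases hne : f = zeroF
    · subst hne
      rw [DesSet, burgeCode_zeroF, descSet_single_false, Rset_zeroF, fsize_zeroF]
      exact ⟨by simp, by simp⟩
    · have := fsize_dB_lt hf hne
      omega
  | succ n ih =>
    intro f hf hle
    by_cases hne : f = zeroF
    · subst hne
      rw [DesSet, burgeCode_zeroF, descSet_single_false, Rset_zeroF, fsize_zeroF]
      exact ⟨by simp, by simp⟩
    · have hg : IsFreq (dB f) := isFreq_dB hf
      have hlt := fsize_dB_lt hf hne
      obtain ⟨ihc, ihs⟩ := ih (dB f) hg (by omega)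
      have hcode := burgeCode_cons hf hne
      set x : Bool := if 1 ∈ Rset f then true else false with hx
      have hcond : (x = true ∧ (burgeCode (dB f))[0]? = some false)
          ↔ (1 ∈ Rset f ∧ 1 ∉ Rset (dB f)) := by
        rw [burgeCode_head, hx]
        constructor
        · rintro ⟨h1, h2⟩
          constructor
          · by_contra hcc
            rw [if_neg hcc] at h1
            exact absurd h1 (by simp)
          · intro hcc
            rw [if_pos hcc] at h2
            simp at h2
        · rintro ⟨h1, h2⟩
          exact ⟨by rw [if_pos h1], by rw [if_neg h2]⟩
      have hite : (if x = true ∧ (burgeCode (dB f))[0]? = some false then 1 else 0)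
          = (if 1 ∈ Rset f ∧ 1 ∉ Rset (dB f) then 1 else 0) := by
        split
        · rw [if_pos (hcond.mp (by assumption))]
        · rw [if_neg (fun hcc => (by assumption : ¬_) (hcond.mpr hcc))]
      have hCL := CL hf
      have hFS := fsize_dB hf
      have hDes : DesSet f = descSet (x :: burgeCode (dB f)) := by
        rw [DesSet, hcode]
      rw [DesSet] at ihs ihc
      constructor
      · rw [hDes, descSet_cons_ncard, hite, ihc]
        omega
      · rw [hDes, descSet_cons_sum, hite, ihs, ihc]
        omega

end Main

/-- `Des(P)` is a super-distinct partition of size `|P|`: its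
elements are positive, pairwise differ by at least 2, and sum to `|P|`. -/
theorem stmt11 (f : ℕ → ℕ) (hf : IsFreq f) :
    (∀ x ∈ DesSet f, 1 ≤ x) ∧
    (∀ x ∈ DesSet f, ∀ y ∈ DesSet f, x ≠ y → 2 ≤ max x y - min x y) ∧
    ∑ᶠ i ∈ DesSet f, i = fsize f := by
  refine ⟨fun x hx => hx.1, ?_, (main_aux (fsize f) f hf le_rfl).2⟩
  have key : ∀ i, i ∈ DesSet f → i + 1 ∉ DesSet f := by
    intro i hi hi1
    obtain ⟨-, -, h3⟩ := hi
    obtain ⟨-, h2, -⟩ := hi1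
    rw [show i + 1 - 1 = i from rfl] at h2
    rw [h2] at h3
    exact absurd h3 (by simp)
  intro x hx y hy hxy
  by_contra h
  push_neg at h
  rcases Nat.lt_or_ge x y with hlt | hge
  · have : y = x + 1 := by omega
    subst this
    exact key x hx hy
  · have : x = y + 1 := by omega
    subst this
    exact key y hy hx
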